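/- For every (m,n) ∈ ℤ², the monomial x₁^m x₂^n lies in the F-subspace span_F{ x₁^{w₁}x₂^{w₂} : (w₁,w₂) ∈ B } + D₁(R) + D₂(R) of R. -/

import Mathlib

/-- The Laurent polynomial ring `F[x₁^{±1}, x₂^{±1}]` as the monoid algebra of `ℤ²` over `F`. -/
noncomputable abbrev LaurentR (F : Type*) [Field F] := AddMonoidAlgebra F (ℤ × ℤ)

/-- The operator `D₁(h) = x₁ ∂h/∂x₁ + (a·x₁^a − c·λ·x₁^{−c}x₂^{−d})·h`. -/
noncomputable def D1 {F : Type*} [Field F] (a c d : ℕ) (lam : F)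
    (h : LaurentR F) : LaurentR F :=
  Finsupp.sum h.coeff (fun v r => AddMonoidAlgebra.single v ((v.1 : F) * r)) +
    (AddMonoidAlgebra.single ((a : ℤ), (0 : ℤ)) (a : F)
      - AddMonoidAlgebra.single (-(c : ℤ), -(d : ℤ)) ((c : F) * lam)) * h

/-- The operator `D₂(h) = x₂ ∂h/∂x₂ + (b·x₂^b − d·λ·x₁^{−c}x₂^{−d})·h`. -/
noncomputable def D2 {F : Type*} [Field F] (b c d : ℕ) (lam : F)
    (h : LaurentR F) : LaurentR F :=
  Finsupp.sum h.coeff (fun v r => AddMonoidAlgebra.single v ((v.2 : F) * r)) +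
    (AddMonoidAlgebra.single ((0 : ℤ), (b : ℤ)) (b : F)
      - AddMonoidAlgebra.single (-(c : ℤ), -(d : ℤ)) ((d : F) * lam)) * h


/-- The set `B` of exponent vectors from (1.1) of the paper. -/
def memB (a b c d : ℕ) (v : ℤ × ℤ) : Prop :=
  if 1 < c ∧ 1 < d then
    -(c : ℤ) < v.1 ∧ v.1 ≤ (a : ℤ) ∧ -(d : ℤ) < v.2 ∧ v.2 ≤ (b : ℤ) ∧
      ((d : ℤ) - 1) * (v.1 - (a : ℤ)) ≤ ((c : ℤ) - 1) * v.2 ∧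
      ((c : ℤ) - 1) * v.2 < ((d : ℤ) - 1) * v.1 + ((c : ℤ) - 1) * (b : ℤ)
  else if c = 1 ∧ 1 < d then
    0 ≤ v.1 ∧ v.1 ≤ (a : ℤ) ∧ -(d : ℤ) < v.2 ∧ v.2 ≤ (b : ℤ) ∧
      ¬ (v.1 = (a : ℤ) ∧ 1 - (d : ℤ) ≤ v.2 ∧ v.2 ≤ 0)
  else if 1 < c ∧ d = 1 then
    -(c : ℤ) < v.1 ∧ v.1 ≤ (a : ℤ) ∧ 0 ≤ v.2 ∧ v.2 ≤ (b : ℤ) ∧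
      ¬ (v.2 = (b : ℤ) ∧ 1 - (c : ℤ) ≤ v.1 ∧ v.1 ≤ 0)
  else
    0 ≤ v.1 ∧ v.1 ≤ (a : ℤ) ∧ 0 ≤ v.2 ∧ v.2 ≤ (b : ℤ) ∧ v ≠ ((0 : ℤ), (b : ℤ))

namespace Stmt4Aux

open AddMonoidAlgebra Submodule

variable {F : Type*} [Field F]

/-- `D1` as a linear map. -/
noncomputable def L1 (a c d : ℕ) (lam : F) : LaurentR F →ₗ[F] LaurentR F where
  toFun := D1 a c d lam
  map_add' h h' := by
    unfold D1
    rw [AddMonoidAlgebra.coeff_add, Finsupp.sum_add_index' (fun v => by simp) (fun v r s => by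
      rw [mul_add]; exact AddMonoidAlgebra.single_add v _ _), mul_add]
    abel
  map_smul' r h := by
    show D1 a c d lam (r • h) = (RingHom.id F) r • D1 a c d lam h
    rw [RingHom.id_apply]
    unfold D1
    rw [smul_add]
    congr 1
    · rw [AddMonoidAlgebra.coeff_smul, Finsupp.sum_smul_index (fun v => by simp), Finsupp.smul_sum]
      apply Finsupp.sum_congr
      intro v _
      rw [mul_left_comm]
      exact (AddMonoidAlgebra.smul_single' r v _).symm
    · exact mul_smul_comm r _ h

/-- `D2` as a linear map. -/
noncomputable def L2 (b c d : ℕ) (lam : F) : LaurentR F →ₗ[F] LaurentR F where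
  toFun := D2 b c d lam
  map_add' h h' := by
    unfold D2
    rw [AddMonoidAlgebra.coeff_add, Finsupp.sum_add_index' (fun v => by simp) (fun v r s => by
      rw [mul_add]; exact AddMonoidAlgebra.single_add v _ _), mul_add]
    abel
  map_smul' r h := by
    show D2 b c d lam (r • h) = (RingHom.id F) r • D2 b c d lam h
    rw [RingHom.id_apply]
    unfold D2
    rw [smul_add]
    congr 1
    · rw [AddMonoidAlgebra.coeff_smul, Finsupp.sum_smul_index (fun v => by simp), Finsupp.smul_sum]
      apply Finsupp.sum_congr
      intro v _
      rw [mul_left_comm]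
      exact (AddMonoidAlgebra.smul_single' r v _).symm
    · exact mul_smul_comm r _ h

/-- The big submodule: span of the `B`-monomials plus the ranges of the two operators. -/
noncomputable def TT (a b c d : ℕ) (lam : F) : Submodule F (LaurentR F) :=
  Submodule.span F
      {x : LaurentR F | ∃ w : ℤ × ℤ, memB a b c d w ∧ x = AddMonoidAlgebra.single w (1 : F)}
    ⊔ LinearMap.range (L1 a c d lam) ⊔ LinearMap.range (L2 b c d lam)

/-- `Kn x y` : the monomial `x₁^x x₂^y` lies in `TT`. -/
def Kn (a b c d : ℕ) (lam : F) (x y : ℤ) : Prop :=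
  AddMonoidAlgebra.single ((x, y) : ℤ × ℤ) (1 : F) ∈ TT a b c d lam

lemma D1_mem (a b c d : ℕ) (lam : F) (h : LaurentR F) :
    D1 a c d lam h ∈ TT a b c d lam :=
  Submodule.mem_sup_left (Submodule.mem_sup_right ⟨h, rfl⟩)

lemma D2_mem (a b c d : ℕ) (lam : F) (h : LaurentR F) :
    D2 b c d lam h ∈ TT a b c d lam :=
  Submodule.mem_sup_right ⟨h, rfl⟩

lemma memB_kn {a b c d : ℕ} {lam : F} {x y : ℤ} (h : memB a b c d (x, y)) :
    Kn a b c d lam x y :=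
  Submodule.mem_sup_left <| Submodule.mem_sup_left <|
    Submodule.subset_span ⟨(x, y), h, rfl⟩

lemma kn_smul {a b c d : ℕ} {lam : F} {x y : ℤ} (h : Kn a b c d lam x y) (r : F) :
    AddMonoidAlgebra.single ((x, y) : ℤ × ℤ) r ∈ TT a b c d lam := by
  have := Submodule.smul_mem (TT a b c d lam) r h
  rwa [AddMonoidAlgebra.smul_single, smul_eq_mul, mul_one] at this

lemma kn_of {a b c d : ℕ} {lam : F} {x y : ℤ} (r : F) (hr : r ≠ 0)
    (h : AddMonoidAlgebra.single ((x, y) : ℤ × ℤ) r ∈ TT a b c d lam) :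
    Kn a b c d lam x y := by
  have := Submodule.smul_mem (TT a b c d lam) r⁻¹ h
  rwa [AddMonoidAlgebra.smul_single, smul_eq_mul, inv_mul_cancel₀ hr] at this

lemma rel1 (a c d : ℕ) (lam : F) (x y : ℤ) :
    D1 a c d lam (AddMonoidAlgebra.single ((x, y) : ℤ × ℤ) 1) =
      AddMonoidAlgebra.single ((x, y) : ℤ × ℤ) (x : F) +
        (AddMonoidAlgebra.single ((x + a, y) : ℤ × ℤ) (a : F)
          - AddMonoidAlgebra.single ((x - c, y - d) : ℤ × ℤ) ((c : F) * lam)) := by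
  unfold D1
  rw [sub_mul, AddMonoidAlgebra.single_mul_single, AddMonoidAlgebra.single_mul_single]
  rw [AddMonoidAlgebra.coeff_single, Finsupp.sum_single_index (by simp)]
  rw [mul_one, mul_one, mul_one]
  rw [show ((a : ℤ), (0 : ℤ)) + (x, y) = ((x + a, y) : ℤ × ℤ) by
    simp [Prod.ext_iff]; ring]
  rw [show (-(c : ℤ), -(d : ℤ)) + (x, y) = ((x - c, y - d) : ℤ × ℤ) by
    simp [Prod.ext_iff]; constructor <;> ring]

lemma rel2 (b c d : ℕ) (lam : F) (x y : ℤ) :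
    D2 b c d lam (AddMonoidAlgebra.single ((x, y) : ℤ × ℤ) 1) =
      AddMonoidAlgebra.single ((x, y) : ℤ × ℤ) (y : F) +
        (AddMonoidAlgebra.single ((x, y + b) : ℤ × ℤ) (b : F)
          - AddMonoidAlgebra.single ((x - c, y - d) : ℤ × ℤ) ((d : F) * lam)) := by
  unfold D2
  rw [sub_mul, AddMonoidAlgebra.single_mul_single, AddMonoidAlgebra.single_mul_single]
  rw [AddMonoidAlgebra.coeff_single, Finsupp.sum_single_index (by simp)]
  rw [mul_one, mul_one, mul_one]
  rw [show ((0 : ℤ), (b : ℤ)) + (x, y) = ((x, y + b) : ℤ × ℤ) by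
    simp [Prod.ext_iff]; ring]
  rw [show (-(c : ℤ), -(d : ℤ)) + (x, y) = ((x - c, y - d) : ℤ × ℤ) by
    simp [Prod.ext_iff]; constructor <;> ring]

/-- Rule R1 : conclude `(x,y)` from `(x, y-b)` and `(x-c, y-b-d)`. -/
lemma ruleR1 {a b c d : ℕ} {lam : F} (hbF : (b : F) ≠ 0) (x y : ℤ)
    (h1 : Kn a b c d lam x (y - b)) (h2 : Kn a b c d lam (x - c) (y - b - d)) :
    Kn a b c d lam x y := by
  have e : AddMonoidAlgebra.single ((x, y - b + b) : ℤ × ℤ) (b : F) =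
      D2 b c d lam (AddMonoidAlgebra.single ((x, y - b) : ℤ × ℤ) 1)
        - AddMonoidAlgebra.single ((x, y - b) : ℤ × ℤ) ((y - b : ℤ) : F)
        + AddMonoidAlgebra.single ((x - c, y - b - d) : ℤ × ℤ) ((d : F) * lam) := by
    rw [rel2]; abel
  have hm : AddMonoidAlgebra.single ((x, y - b + b) : ℤ × ℤ) (b : F) ∈ TT a b c d lam := by
    rw [e]
    exact add_mem (sub_mem (D2_mem a b c d lam _) (kn_smul h1 _)) (kn_smul h2 _)
  rw [show (x, y - b + b) = ((x, y) : ℤ × ℤ) by simp] at hm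
  exact kn_of _ hbF hm

/-- Rule R2 : conclude `(x,y)` from `(x+c, y+d)` and `(x+c+a, y+d)`. -/
lemma ruleR2 {a b c d : ℕ} {lam : F} (hcl : (c : F) * lam ≠ 0) (x y : ℤ)
    (h1 : Kn a b c d lam (x + c) (y + d)) (h2 : Kn a b c d lam (x + c + a) (y + d)) :
    Kn a b c d lam x y := by
  have e : AddMonoidAlgebra.single ((x + c - c, y + d - d) : ℤ × ℤ) ((c : F) * lam) =
      AddMonoidAlgebra.single ((x + c, y + d) : ℤ × ℤ) ((x + c : ℤ) : F)
        + AddMonoidAlgebra.single ((x + c + a, y + d) : ℤ × ℤ) (a : F)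
        - D1 a c d lam (AddMonoidAlgebra.single ((x + c, y + d) : ℤ × ℤ) 1) := by
    rw [rel1]; abel
  have hm : AddMonoidAlgebra.single ((x + c - c, y + d - d) : ℤ × ℤ) ((c : F) * lam)
      ∈ TT a b c d lam := by
    rw [e]
    exact sub_mem (add_mem (kn_smul h1 _) (kn_smul h2 _)) (D1_mem a b c d lam _)
  rw [show (x + c - c, y + d - d) = ((x, y) : ℤ × ℤ) by simp] at hm
  exact kn_of _ hcl hm

/-- Rule R3 : conclude `(x,y)` from `(x+c, y+d)` and `(x+c, y+d+b)`. -/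
lemma ruleR3 {a b c d : ℕ} {lam : F} (hdl : (d : F) * lam ≠ 0) (x y : ℤ)
    (h1 : Kn a b c d lam (x + c) (y + d)) (h2 : Kn a b c d lam (x + c) (y + d + b)) :
    Kn a b c d lam x y := by
  have e : AddMonoidAlgebra.single ((x + c - c, y + d - d) : ℤ × ℤ) ((d : F) * lam) =
      AddMonoidAlgebra.single ((x + c, y + d) : ℤ × ℤ) ((y + d : ℤ) : F)
        + AddMonoidAlgebra.single ((x + c, y + d + b) : ℤ × ℤ) (b : F)
        - D2 b c d lam (AddMonoidAlgebra.single ((x + c, y + d) : ℤ × ℤ) 1) := by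
    rw [rel2]; abel
  have hm : AddMonoidAlgebra.single ((x + c - c, y + d - d) : ℤ × ℤ) ((d : F) * lam)
      ∈ TT a b c d lam := by
    rw [e]
    exact sub_mem (add_mem (kn_smul h1 _) (kn_smul h2 _)) (D2_mem a b c d lam _)
  rw [show (x + c - c, y + d - d) = ((x, y) : ℤ × ℤ) by simp] at hm
  exact kn_of _ hdl hm

/-- The λ-free combination `d•D1 - c•D2` applied to a monomial. -/
lemma relE (a b c d : ℕ) (lam : F) (x y : ℤ) :
    AddMonoidAlgebra.single ((x + a, y) : ℤ × ℤ) ((d : F) * (a : F)) =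
      (d : F) • D1 a c d lam (AddMonoidAlgebra.single ((x, y) : ℤ × ℤ) 1)
        - (c : F) • D2 b c d lam (AddMonoidAlgebra.single ((x, y) : ℤ × ℤ) 1)
        + AddMonoidAlgebra.single ((x, y + b) : ℤ × ℤ) ((c : F) * (b : F))
        - AddMonoidAlgebra.single ((x, y) : ℤ × ℤ) ((d : F) * (x : F))
        + AddMonoidAlgebra.single ((x, y) : ℤ × ℤ) ((c : F) * (y : F)) := by
  rw [rel1, rel2 b c d lam]
  rw [smul_add, smul_add, smul_sub, smul_sub]
  simp only [AddMonoidAlgebra.smul_single']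
  rw [show (d : F) * ((c : F) * lam) = (c : F) * ((d : F) * lam) by ring]
  abel

/-- Rule E : conclude `(x,y)` from `(x-a, y)` and `(x-a, y+b)`. -/
lemma ruleE {a b c d : ℕ} {lam : F} (hda : (d : F) * (a : F) ≠ 0) (x y : ℤ)
    (h1 : Kn a b c d lam (x - a) y) (h2 : Kn a b c d lam (x - a) (y + b)) :
    Kn a b c d lam x y := by
  have hm : AddMonoidAlgebra.single ((x - a + a, y) : ℤ × ℤ) ((d : F) * (a : F))
      ∈ TT a b c d lam := by
    rw [relE a b c d lam (x - a) y]
    exact add_mem (sub_mem (add_mem (sub_mem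
      (Submodule.smul_mem _ _ (D1_mem a b c d lam _))
      (Submodule.smul_mem _ _ (D2_mem a b c d lam _))) (kn_smul h2 _)) (kn_smul h1 _))
      (kn_smul h1 _)
  rw [show (x - a + a, y) = ((x, y) : ℤ × ℤ) by simp] at hm
  exact kn_of _ hda hm

/-- Rule F : conclude `(x,y)` from `(x, y-b)` and `(x+a, y-b)`. -/
lemma ruleF {a b c d : ℕ} {lam : F} (hcb : (c : F) * (b : F) ≠ 0) (x y : ℤ)
    (h1 : Kn a b c d lam x (y - b)) (h2 : Kn a b c d lam (x + a) (y - b)) :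
    Kn a b c d lam x y := by
  have e : AddMonoidAlgebra.single ((x, y - b + b) : ℤ × ℤ) ((c : F) * (b : F)) =
      (c : F) • D2 b c d lam (AddMonoidAlgebra.single ((x, y - b) : ℤ × ℤ) 1)
        - (d : F) • D1 a c d lam (AddMonoidAlgebra.single ((x, y - b) : ℤ × ℤ) 1)
        + AddMonoidAlgebra.single ((x + a, y - b) : ℤ × ℤ) ((d : F) * (a : F))
        + AddMonoidAlgebra.single ((x, y - b) : ℤ × ℤ) ((d : F) * ((x : ℤ) : F))
        - AddMonoidAlgebra.single ((x, y - b) : ℤ × ℤ) ((c : F) * ((y - b : ℤ) : F)) := by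
    rw [rel1, rel2 b c d lam]
    rw [smul_add, smul_add, smul_sub, smul_sub]
    simp only [AddMonoidAlgebra.smul_single']
    rw [show (c : F) * ((d : F) * lam) = (d : F) * ((c : F) * lam) by ring]
    abel
  have hm : AddMonoidAlgebra.single ((x, y - b + b) : ℤ × ℤ) ((c : F) * (b : F))
      ∈ TT a b c d lam := by
    rw [e]
    exact sub_mem (add_mem (add_mem (sub_mem
      (Submodule.smul_mem _ _ (D2_mem a b c d lam _))
      (Submodule.smul_mem _ _ (D1_mem a b c d lam _))) (kn_smul h2 _)) (kn_smul h1 _))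
      (kn_smul h1 _)
  rw [show (x, y - b + b) = ((x, y) : ℤ × ℤ) by simp] at hm
  exact kn_of _ hcb hm

/-! ### membership-in-B introduction lemmas -/

lemma memB_mk_main {a b c d : ℕ} (hc1 : 1 < c) (hd1 : 1 < d) {x y : ℤ}
    (h1 : -(c : ℤ) < x) (h2 : x ≤ (a : ℤ)) (h3 : -(d : ℤ) < y) (h4 : y ≤ (b : ℤ))
    (h5 : ((d : ℤ) - 1) * (x - (a : ℤ)) ≤ ((c : ℤ) - 1) * y)
    (h6 : ((c : ℤ) - 1) * y < ((d : ℤ) - 1) * x + ((c : ℤ) - 1) * (b : ℤ)) :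
    memB a b c d (x, y) := by
  unfold memB
  split_ifs with h h' h''
  · exact ⟨h1, h2, h3, h4, h5, h6⟩
  · exact absurd (⟨hc1, hd1⟩ : 1 < c ∧ 1 < d) h
  · exact absurd (⟨hc1, hd1⟩ : 1 < c ∧ 1 < d) h
  · exact absurd (⟨hc1, hd1⟩ : 1 < c ∧ 1 < d) h

lemma memB_mk_c1 {a b c d : ℕ} (hc1 : c = 1) (hd1 : 1 < d) {x y : ℤ}
    (h1 : 0 ≤ x) (h2 : x ≤ (a : ℤ)) (h3 : -(d : ℤ) < y) (h4 : y ≤ (b : ℤ))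
    (h5 : ¬ (x = (a : ℤ) ∧ 1 - (d : ℤ) ≤ y ∧ y ≤ 0)) :
    memB a b c d (x, y) := by
  unfold memB
  split_ifs with h h' h''
  · exact absurd h (by omega)
  · exact ⟨h1, h2, h3, h4, h5⟩
  · exact absurd h' (by omega)
  · exact absurd (⟨hc1, hd1⟩ : c = 1 ∧ 1 < d) h'

lemma memB_mk_d1 {a b c d : ℕ} (hc1 : 1 < c) (hd1 : d = 1) {x y : ℤ}
    (h1 : -(c : ℤ) < x) (h2 : x ≤ (a : ℤ)) (h3 : 0 ≤ y) (h4 : y ≤ (b : ℤ))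
    (h5 : ¬ (y = (b : ℤ) ∧ 1 - (c : ℤ) ≤ x ∧ x ≤ 0)) :
    memB a b c d (x, y) := by
  unfold memB
  split_ifs with h h' h''
  · exact absurd h (by omega)
  · exact absurd h' (by omega)
  · exact ⟨h1, h2, h3, h4, h5⟩
  · exact absurd (⟨hc1, hd1⟩ : 1 < c ∧ d = 1) h''

lemma memB_mk_11 {a b c d : ℕ} (hc1 : c = 1) (hd1 : d = 1) {x y : ℤ}
    (h1 : 0 ≤ x) (h2 : x ≤ (a : ℤ)) (h3 : 0 ≤ y) (h4 : y ≤ (b : ℤ))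
    (h5 : ¬ (x = 0 ∧ y = (b : ℤ))) :
    memB a b c d (x, y) := by
  unfold memB
  split_ifs with h h' h''
  · exact absurd h (by omega)
  · exact absurd h' (by omega)
  · exact absurd h'' (by omega)
  · refine ⟨h1, h2, h3, h4, fun he => h5 ?_⟩
    rw [Prod.ext_iff] at he
    exact ⟨he.1, he.2⟩

end Stmt4Aux

section Regions

open Stmt4Aux

variable {F : Type*} [Field F]
variable {a b c d : ℕ} {lam : F}

/-- The HIGH part of the box, main case. Induction on `y`. -/
lemma knowHIGH (hc1 : 1 < c) (hd1 : 1 < d) (ha : 0 < a) (hb : 0 < b)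
    (hcb : (c : F) * (b : F) ≠ 0) :
    ∀ n : ℕ, ∀ x y : ℤ, -(c : ℤ) < x → x ≤ (a : ℤ) → -(d : ℤ) < y → y ≤ (b : ℤ) →
      ((d : ℤ) - 1) * x + ((c : ℤ) - 1) * (b : ℤ) ≤ ((c : ℤ) - 1) * y →
      (y + d).toNat ≤ n → Kn a b c d lam x y := by
  intro n
  induction n using Nat.strong_induction_on with
  | _ n ih =>
    intro x y hx1 hx2 hy1 hy2 hHI hm
    have hP : (0 : ℤ) < (c : ℤ) - 1 := by omega
    have hQ : (0 : ℤ) < (d : ℤ) - 1 := by omega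
    -- x ≤ 0
    have hyB : ((c : ℤ) - 1) * y ≤ ((c : ℤ) - 1) * b :=
      mul_le_mul_of_nonneg_left hy2 hP.le
    have hx0 : x ≤ 0 := by
      by_contra hcon
      push_neg at hcon
      have h1 : ((d : ℤ) - 1) * 1 ≤ ((d : ℤ) - 1) * x :=
        mul_le_mul_of_nonneg_left (by omega) hQ.le
      linarith
    -- y - b ≥ 1 - d
    have h1C : ((d : ℤ) - 1) * (1 - (c : ℤ)) ≤ ((d : ℤ) - 1) * x :=
      mul_le_mul_of_nonneg_left (by omega) hQ.le
    have hyb : 1 - (d : ℤ) ≤ y - b := by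
      by_contra hcon
      push_neg at hcon
      have h2 : ((c : ℤ) - 1) * (y - b) ≤ ((c : ℤ) - 1) * (-(d : ℤ)) :=
        mul_le_mul_of_nonneg_left (by omega) hP.le
      nlinarith
    -- generic premise handler at second coordinate y - b
    have prem : ∀ x2 : ℤ, -(c : ℤ) < x2 → x2 ≤ (a : ℤ) →
        ((d : ℤ) - 1) * (x2 - a) ≤ ((c : ℤ) - 1) * (y - b) →
        Kn a b c d lam x2 (y - b) := by
      intro x2 hx21 hx22 hlow
      by_cases hup : ((c : ℤ) - 1) * (y - b) < ((d : ℤ) - 1) * x2 + ((c : ℤ) - 1) * b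
      · exact memB_kn (memB_mk_main hc1 hd1 hx21 hx22 (by omega) (by omega) hlow hup)
      · push_neg at hup
        exact ih (y - b + d).toNat (by omega) x2 (y - b) hx21 hx22 (by omega) (by omega)
          hup le_rfl
    have key1 : ((d : ℤ) - 1) * x ≤ ((c : ℤ) - 1) * (y - b) := by nlinarith
    have hp1 : Kn a b c d lam x (y - b) := by
      apply prem x hx1 hx2
      have := mul_le_mul_of_nonneg_left (show x - (a : ℤ) ≤ x by omega) hQ.le
      linarith
    have hp2 : Kn a b c d lam (x + a) (y - b) := by
      apply prem (x + a) (by omega) (by omega)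
      have : ((d : ℤ) - 1) * (x + a - a) = ((d : ℤ) - 1) * x := by ring
      linarith
    exact ruleF hcb x y hp1 hp2

/-- The LOW part of the box, main case. Induction on `x`. -/
lemma knowLOW (hc1 : 1 < c) (hd1 : 1 < d) (ha : 0 < a) (hb : 0 < b)
    (hcb : (c : F) * (b : F) ≠ 0) (hda : (d : F) * (a : F) ≠ 0) :
    ∀ n : ℕ, ∀ x y : ℤ, -(c : ℤ) < x → x ≤ (a : ℤ) → -(d : ℤ) < y → y ≤ (b : ℤ) →
      ((c : ℤ) - 1) * y < ((d : ℤ) - 1) * (x - (a : ℤ)) →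
      (x + c).toNat ≤ n → Kn a b c d lam x y := by
  intro n
  induction n using Nat.strong_induction_on with
  | _ n ih =>
    intro x y hx1 hx2 hy1 hy2 hLO hm
    have hP : (0 : ℤ) < (c : ℤ) - 1 := by omega
    have hQ : (0 : ℤ) < (d : ℤ) - 1 := by omega
    -- y < 0
    have hqa : ((d : ℤ) - 1) * (x - a) ≤ ((d : ℤ) - 1) * 0 :=
      mul_le_mul_of_nonneg_left (by omega) hQ.le
    have hy0 : y ≤ -1 := by
      by_contra hcon
      push_neg at hcon
      have : ((c : ℤ) - 1) * 0 ≤ ((c : ℤ) - 1) * y :=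
        mul_le_mul_of_nonneg_left (by omega) hP.le
      nlinarith
    -- x - a ≥ 2 - c
    have hya : ((c : ℤ) - 1) * (1 - (d : ℤ)) ≤ ((c : ℤ) - 1) * y :=
      mul_le_mul_of_nonneg_left (by omega) hP.le
    have hxa : 2 - (c : ℤ) ≤ x - a := by
      by_contra hcon
      push_neg at hcon
      have : ((d : ℤ) - 1) * (x - a) ≤ ((d : ℤ) - 1) * (1 - (c : ℤ)) :=
        mul_le_mul_of_nonneg_left (by omega) hQ.le
      nlinarith
    -- premise handler at first coordinate x - a
    have prem : ∀ y2 : ℤ, -(d : ℤ) < y2 → y2 ≤ (b : ℤ) →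
        ((c : ℤ) - 1) * y2 < ((d : ℤ) - 1) * (x - a) + ((c : ℤ) - 1) * (b : ℤ) →
        Kn a b c d lam (x - a) y2 := by
      intro y2 hy21 hy22 hup
      by_cases hlow : ((d : ℤ) - 1) * (x - a - a) ≤ ((c : ℤ) - 1) * y2
      · exact memB_kn (memB_mk_main hc1 hd1 (by omega) (by omega) hy21 hy22 hlow hup)
      · push_neg at hlow
        exact ih (x - a + c).toNat (by omega) (x - a) y2 (by omega) (by omega)
          hy21 hy22 hlow le_rfl
    have hp1 : Kn a b c d lam (x - a) y := by
      apply prem y hy1 hy2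
      have : (0 : ℤ) < ((c : ℤ) - 1) * (b : ℤ) := by positivity
      linarith
    have hp2 : Kn a b c d lam (x - a) (y + b) := by
      apply prem (y + b) (by omega) (by omega)
      have : ((c : ℤ) - 1) * (y + b) = ((c : ℤ) - 1) * y + ((c : ℤ) - 1) * (b : ℤ) := by
        ring
      linarith
    exact ruleE hda x y hp1 hp2

/-- Everything in the (half-open) box `(-c, a] × (-d, b]` is known. -/
lemma knowBox (ha : 0 < a) (hb : 0 < b) (hc : 0 < c) (hd : 0 < d)
    (hcb : (c : F) * (b : F) ≠ 0) (hda : (d : F) * (a : F) ≠ 0)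
    (x y : ℤ) (hx1 : -(c : ℤ) < x) (hx2 : x ≤ (a : ℤ))
    (hy1 : -(d : ℤ) < y) (hy2 : y ≤ (b : ℤ)) :
    Kn a b c d lam x y := by
  rcases Nat.lt_or_ge 1 c with hc1 | hc1
  · rcases Nat.lt_or_ge 1 d with hd1 | hd1
    · -- main case
      by_cases hlow : ((d : ℤ) - 1) * (x - (a : ℤ)) ≤ ((c : ℤ) - 1) * y
      · by_cases hup : ((c : ℤ) - 1) * y < ((d : ℤ) - 1) * x + ((c : ℤ) - 1) * (b : ℤ)
        · exact memB_kn (memB_mk_main hc1 hd1 hx1 hx2 hy1 hy2 hlow hup)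
        · push_neg at hup
          exact knowHIGH hc1 hd1 ha hb hcb (y + d).toNat x y hx1 hx2 hy1 hy2 hup le_rfl
      · push_neg at hlow
        exact knowLOW hc1 hd1 ha hb hcb hda (x + c).toNat x y hx1 hx2 hy1 hy2 hlow le_rfl
    · -- c > 1, d = 1
      have hd1' : d = 1 := by omega
      by_cases hexc : y = (b : ℤ) ∧ 1 - (c : ℤ) ≤ x ∧ x ≤ 0
      · apply ruleF hcb x y
        · exact memB_kn (memB_mk_d1 hc1 hd1' (by omega) (by omega) (by omega) (by omega)
            (by omega))
        · exact memB_kn (memB_mk_d1 hc1 hd1' (by omega) (by omega) (by omega) (by omega)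
            (by omega))
      · exact memB_kn (memB_mk_d1 hc1 hd1' hx1 hx2 (by omega) hy2 (by omega))
  · have hc1' : c = 1 := by omega
    rcases Nat.lt_or_ge 1 d with hd1 | hd1
    · -- c = 1, d > 1
      by_cases hexc : x = (a : ℤ) ∧ 1 - (d : ℤ) ≤ y ∧ y ≤ 0
      · apply ruleE hda x y
        · exact memB_kn (memB_mk_c1 hc1' hd1 (by omega) (by omega) (by omega) (by omega)
            (by omega))
        · exact memB_kn (memB_mk_c1 hc1' hd1 (by omega) (by omega) (by omega) (by omega)
            (by omega))
      · exact memB_kn (memB_mk_c1 hc1' hd1 (by omega) hx2 hy1 hy2 (by omega))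
    · -- c = 1, d = 1
      have hd1' : d = 1 := by omega
      by_cases hexc : x = 0 ∧ y = (b : ℤ)
      · apply ruleF hcb x y
        · exact memB_kn (memB_mk_11 hc1' hd1' (by omega) (by omega) (by omega) (by omega)
            (by omega))
        · exact memB_kn (memB_mk_11 hc1' hd1' (by omega) (by omega) (by omega) (by omega)
            (by omega))
      · exact memB_kn (memB_mk_11 hc1' hd1' (by omega) hx2 (by omega) hy2 (by omega))

/-- The vertical strip `(-c, a] × (-d, ∞)`. -/
lemma knowK2 (ha : 0 < a) (hb : 0 < b) (hc : 0 < c) (hd : 0 < d)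
    (hbF : (b : F) ≠ 0) (hcb : (c : F) * (b : F) ≠ 0) (hda : (d : F) * (a : F) ≠ 0) :
    ∀ n : ℕ, ∀ x y : ℤ, -(c : ℤ) < x → x ≤ (a : ℤ) → -(d : ℤ) < y →
      (y - b).toNat ≤ n → Kn a b c d lam x y := by
  intro n
  induction n using Nat.strong_induction_on with
  | _ n ih =>
    intro x y hx1 hx2 hy1 hm
    by_cases hyb : y ≤ (b : ℤ)
    · exact knowBox ha hb hc hd hcb hda x y hx1 hx2 hy1 hyb
    · push_neg at hyb
      by_cases hx0 : 0 < x
      · apply ruleR1 hbF x y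
        · exact ih (y - b - b).toNat (by omega) x (y - b) hx1 hx2 (by omega) le_rfl
        · exact ih (y - b - d - b).toNat (by omega) (x - c) (y - b - d) (by omega)
            (by omega) (by omega) le_rfl
      · push_neg at hx0
        apply ruleF hcb x y
        · exact ih (y - b - b).toNat (by omega) x (y - b) hx1 hx2 (by omega) le_rfl
        · exact ih (y - b - b).toNat (by omega) (x + a) (y - b) (by omega) (by omega)
            (by omega) le_rfl

/-- The region `(-c, ∞) × (-d, ∞)`. -/
lemma knowK3 (ha : 0 < a) (hb : 0 < b) (hc : 0 < c) (hd : 0 < d)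
    (hbF : (b : F) ≠ 0) (hcb : (c : F) * (b : F) ≠ 0) (hda : (d : F) * (a : F) ≠ 0) :
    ∀ n : ℕ, ∀ x y : ℤ, -(c : ℤ) < x → -(d : ℤ) < y →
      (x - a).toNat ≤ n → Kn a b c d lam x y := by
  intro n
  induction n using Nat.strong_induction_on with
  | _ n ih =>
    intro x y hx1 hy1 hm
    by_cases hxa : x ≤ (a : ℤ)
    · exact knowK2 ha hb hc hd hbF hcb hda (y - b).toNat x y hx1 hxa hy1 le_rfl
    · push_neg at hxa
      apply ruleE hda x y
      · exact ih (x - a - a).toNat (by omega) (x - a) y (by omega) hy1 le_rfl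
      · exact ih (x - a - a).toNat (by omega) (x - a) (y + b) (by omega) (by omega) le_rfl

/-- The region `(-c, ∞) × ℤ`. -/
lemma knowK4 (ha : 0 < a) (hb : 0 < b) (hc : 0 < c) (hd : 0 < d)
    (hbF : (b : F) ≠ 0) (hcb : (c : F) * (b : F) ≠ 0) (hda : (d : F) * (a : F) ≠ 0)
    (hdl : (d : F) * lam ≠ 0) :
    ∀ n : ℕ, ∀ x y : ℤ, -(c : ℤ) < x → (-(d : ℤ) - y).toNat ≤ n →
      Kn a b c d lam x y := by
  intro n
  induction n using Nat.strong_induction_on with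
  | _ n ih =>
    intro x y hx1 hm
    by_cases hy1 : -(d : ℤ) < y
    · exact knowK3 ha hb hc hd hbF hcb hda (x - a).toNat x y hx1 hy1 le_rfl
    · push_neg at hy1
      apply ruleR3 hdl x y
      · by_cases h : -(d : ℤ) < y + d
        · exact knowK3 ha hb hc hd hbF hcb hda (x + c - a).toNat (x + c) (y + d)
            (by omega) h le_rfl
        · exact ih (-(d : ℤ) - (y + d)).toNat (by omega) (x + c) (y + d) (by omega) le_rfl
      · by_cases h : -(d : ℤ) < y + d + b
        · exact knowK3 ha hb hc hd hbF hcb hda (x + c - a).toNat (x + c) (y + d + b)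
            (by omega) h le_rfl
        · exact ih (-(d : ℤ) - (y + d + b)).toNat (by omega) (x + c) (y + d + b) (by omega)
            le_rfl

/-- Everything. -/
lemma knowAll (ha : 0 < a) (hb : 0 < b) (hc : 0 < c) (hd : 0 < d)
    (hbF : (b : F) ≠ 0) (hcb : (c : F) * (b : F) ≠ 0) (hda : (d : F) * (a : F) ≠ 0)
    (hdl : (d : F) * lam ≠ 0) (hcl : (c : F) * lam ≠ 0) :
    ∀ n : ℕ, ∀ x y : ℤ, (-(c : ℤ) - x).toNat ≤ n → Kn a b c d lam x y := by
  intro n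
  induction n using Nat.strong_induction_on with
  | _ n ih =>
    intro x y hm
    by_cases hx1 : -(c : ℤ) < x
    · exact knowK4 ha hb hc hd hbF hcb hda hdl (-(d : ℤ) - y).toNat x y hx1 le_rfl
    · push_neg at hx1
      apply ruleR2 hcl x y
      · by_cases h : -(c : ℤ) < x + c
        · exact knowK4 ha hb hc hd hbF hcb hda hdl (-(d : ℤ) - (y + d)).toNat (x + c)
            (y + d) h le_rfl
        · exact ih (-(c : ℤ) - (x + c)).toNat (by omega) (x + c) (y + d) le_rfl
      · by_cases h : -(c : ℤ) < x + c + a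
        · exact knowK4 ha hb hc hd hbF hcb hda hdl (-(d : ℤ) - (y + d)).toNat (x + c + a)
            (y + d) h le_rfl
        · exact ih (-(c : ℤ) - (x + c + a)).toNat (by omega) (x + c + a) (y + d) le_rfl

end Regions

theorem stmt4 {F : Type*} [Field F] (p a b c d : ℕ)
    (ha : 0 < a) (hb : 0 < b) (hc : 0 < c) (hd : 0 < d)
    (hab : Nat.gcd a b = 1) (hac : Nat.gcd a c = 1)
    (hbc : Nat.gcd b c = 1) (hbd : Nat.gcd b d = 1)
    (hp : 0 < p) [CharP F p] (hpdvd : ¬ p ∣ a * b * c * d)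
    (lam : F) (hlam : lam ≠ 0) (m n : ℤ) :
    ∃ g ∈ Submodule.span F
        {x : LaurentR F | ∃ w : ℤ × ℤ, memB a b c d w ∧ x = AddMonoidAlgebra.single w (1 : F)},
      ∃ h₁ h₂ : LaurentR F,
        AddMonoidAlgebra.single ((m, n) : ℤ × ℤ) (1 : F)
          = g + D1 a c d lam h₁ + D2 b c d lam h₂ := by
  classical
  have hpa : ¬ p ∣ a := fun h => hpdvd (h.trans ⟨b * c * d, by ring⟩)
  have hpb : ¬ p ∣ b := fun h => hpdvd (h.trans ⟨a * c * d, by ring⟩)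
  have hpc : ¬ p ∣ c := fun h => hpdvd (h.trans ⟨a * b * d, by ring⟩)
  have hpd : ¬ p ∣ d := fun h => hpdvd (h.trans ⟨a * b * c, by ring⟩)
  have haF : (a : F) ≠ 0 := fun h => hpa ((CharP.cast_eq_zero_iff F p a).mp h)
  have hbF : (b : F) ≠ 0 := fun h => hpb ((CharP.cast_eq_zero_iff F p b).mp h)
  have hcF : (c : F) ≠ 0 := fun h => hpc ((CharP.cast_eq_zero_iff F p c).mp h)
  have hdF : (d : F) ≠ 0 := fun h => hpd ((CharP.cast_eq_zero_iff F p d).mp h)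
  have key : Stmt4Aux.Kn a b c d lam m n :=
    knowAll ha hb hc hd hbF (mul_ne_zero hcF hbF) (mul_ne_zero hdF haF)
      (mul_ne_zero hdF hlam) (mul_ne_zero hcF hlam) ((-(c : ℤ) - m).toNat) m n le_rfl
  have key' : AddMonoidAlgebra.single ((m, n) : ℤ × ℤ) (1 : F) ∈ Stmt4Aux.TT a b c d lam :=
    key
  unfold Stmt4Aux.TT at key'
  rcases Submodule.mem_sup.mp key' with ⟨y1, hy1, z, hz, hsum⟩
  rcases Submodule.mem_sup.mp hy1 with ⟨g, hg, w, hw, hgw⟩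
  obtain ⟨h₁, rfl⟩ := LinearMap.mem_range.mp hw
  obtain ⟨h₂, rfl⟩ := LinearMap.mem_range.mp hz
  refine ⟨g, hg, h₁, h₂, ?_⟩
  rw [← hsum, ← hgw]
  rfl
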